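/- Define ω(θ, r, p) := 3π/2 − arctan((r cos θ + p sin θ)/(r sin θ − p cos θ)). Let γ : ℝ → ℝ be differentiable, fix θ and r, and define f(p) := γ(ω(θ, r, p))·√(r² + p²). Then at every p with (r, p) ≠ (0,0) and r sin θ − p cos θ ≠ 0, f is differentiable with f′(p) = (γ(ω(θ,r,p))·p − γ′(ω(θ,r,p))·r)/√(r² + p²). Consequently, if in addition r > 0 and γ(ω(θ,r,p)) ≠ 0, then f′(p) = 0 if and only if γ′(ω(θ,r,p))/γ(ω(θ,r,p)) = p/r. -/

import Mathlib

open Real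

/-- The surface orientation angle of the outward normal to a polar curve R = r(θ),
as a function of θ, r and p = dr/dθ. -/
noncomputable def orientationAngle (θ r p : ℝ) : ℝ :=
  3 * π / 2 -
    Real.arctan ((r * Real.cos θ + p * Real.sin θ) / (r * Real.sin θ - p * Real.cos θ))

/-- For differentiable γ and f(p) := γ(ω(θ,r,p))·√(r²+p²), at every p with
(r,p) ≠ (0,0) and r sin θ − p cos θ ≠ 0 we have
f′(p) = (γ(ω)·p − γ′(ω)·r)/√(r²+p²); consequently if r > 0 and γ(ω) ≠ 0 then
f′(p) = 0 ↔ γ′(ω)/γ(ω) = p/r (the corner angle condition). -/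
theorem stmt8 (γ : ℝ → ℝ) (hγ : Differentiable ℝ γ) (θ r p : ℝ)
    (h0 : (r, p) ≠ (0, 0)) (hD : r * Real.sin θ - p * Real.cos θ ≠ 0) :
    HasDerivAt (fun q => γ (orientationAngle θ r q) * Real.sqrt (r ^ 2 + q ^ 2))
      ((γ (orientationAngle θ r p) * p - deriv γ (orientationAngle θ r p) * r) /
        Real.sqrt (r ^ 2 + p ^ 2)) p ∧
    (0 < r → γ (orientationAngle θ r p) ≠ 0 →
      ((γ (orientationAngle θ r p) * p - deriv γ (orientationAngle θ r p) * r) /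
          Real.sqrt (r ^ 2 + p ^ 2) = 0 ↔
        deriv γ (orientationAngle θ r p) / γ (orientationAngle θ r p) = p / r)) := by
  have hrp : r ≠ 0 ∨ p ≠ 0 := by
    by_contra h; push_neg at h
    exact h0 (by simp [h.1, h.2])
  have hS : 0 < r ^ 2 + p ^ 2 := by
    rcases hrp with h | h <;> positivity
  have hsq : Real.sqrt (r ^ 2 + p ^ 2) ≠ 0 := by positivity
  set ω := orientationAngle θ r p with hω
  set N := r * Real.cos θ + p * Real.sin θ with hNdef
  set D := r * Real.sin θ - p * Real.cos θ with hDdef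
  have hND : N ^ 2 + D ^ 2 = r ^ 2 + p ^ 2 := by
    have := Real.sin_sq_add_cos_sq θ
    simp only [hNdef, hDdef]; nlinarith
  have hN : HasDerivAt (fun q => r * Real.cos θ + q * Real.sin θ) (Real.sin θ) p := by
    simpa using ((hasDerivAt_id p).mul_const (Real.sin θ)).const_add (r * Real.cos θ)
  have hDq : HasDerivAt (fun q => r * Real.sin θ - q * Real.cos θ) (-Real.cos θ) p := by
    simpa using HasDerivAt.const_sub (r * Real.sin θ)
      ((hasDerivAt_id p).mul_const (Real.cos θ))
  have hu : HasDerivAt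
      (fun q => (r * Real.cos θ + q * Real.sin θ) / (r * Real.sin θ - q * Real.cos θ))
      (r / D ^ 2) p := by
    refine (hN.div hDq hD).congr_deriv ?_
    symm
    rw [hDdef]
    congr 1
    linear_combination (-r) * Real.sin_sq_add_cos_sq θ
  have harctan : HasDerivAt
      (fun q => Real.arctan ((r * Real.cos θ + q * Real.sin θ) /
        (r * Real.sin θ - q * Real.cos θ)))
      (r / (r ^ 2 + p ^ 2)) p := by
    have h := (Real.hasDerivAt_arctan (N / D)).comp p hu
    refine h.congr_deriv ?_
    symm
    have hD2 : D ^ 2 ≠ 0 := pow_ne_zero 2 hD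
    rw [← hND]
    field_simp
    ring
  have hωd : HasDerivAt (fun q => orientationAngle θ r q) (-(r / (r ^ 2 + p ^ 2))) p := by
    unfold orientationAngle
    exact harctan.const_sub (3 * π / 2)
  have hγω : HasDerivAt (fun q => γ (orientationAngle θ r q))
      (deriv γ ω * (-(r / (r ^ 2 + p ^ 2)))) p :=
    ((hγ ω).hasDerivAt).comp p hωd
  have hsqrt : HasDerivAt (fun q => Real.sqrt (r ^ 2 + q ^ 2))
      (p / Real.sqrt (r ^ 2 + p ^ 2)) p := by
    have hin : HasDerivAt (fun q : ℝ => r ^ 2 + q ^ 2) (2 * p) p := by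
      simpa using (hasDerivAt_pow 2 p).const_add (r ^ 2)
    have h := (Real.hasDerivAt_sqrt hS.ne').comp p hin
    refine h.congr_deriv ?_
    symm
    field_simp
  have hf := hγω.mul hsqrt
  have hs2 : Real.sqrt (r ^ 2 + p ^ 2) ^ 2 = r ^ 2 + p ^ 2 := Real.sq_sqrt hS.le
  constructor
  · refine hf.congr_deriv ?_
    symm
    rw [← hω, eq_comm, eq_div_iff hsq]
    field_simp
    linear_combination (-(deriv γ ω * r)) * hs2
  · intro hr hγ0
    rw [div_eq_zero_iff]
    have hr' : r ≠ 0 := hr.ne'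
    constructor
    · rintro (h | h)
      · field_simp
        linarith
      · exact absurd h hsq
    · intro h
      left
      field_simp at h
      linarith
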